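/- Let μ be a finite Borel measure on 𝒞 × 𝒞 and let X be an element of C₀(μ,k) for some positive integer k. Then, viewing X as a nonnegative k×k matrix, C(X,r) ⊆ C(μ,r) for every positive integer r. -/

import Mathlib

open MeasureTheory Matrix
open scoped Pointwise

noncomputable section

/-- The Cantor set `{0,1}^ℕ`. -/
abbrev Cantor : Type := ℕ → Bool

/-- Cylinder set of a binary string given as a function `Fin n → Bool`. -/
def cylF {n : ℕ} (x : Fin n → Bool) : Set Cantor := {ω | ∀ i : Fin n, ω i = x i}

/-- Cylinder set of a binary string given as a list. -/
def cyl (x : List Bool) : Set Cantor := {ω | ∀ i : Fin x.length, ω i = x.get i}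

/-- `ν` is the fair coin-flipping (uniform product) measure on the Cantor set:
the unique Borel probability measure giving every cylinder of depth `n` mass `2⁻ⁿ`. -/
def IsCoinMeasure (ν : Measure Cantor) : Prop :=
  IsProbabilityMeasure ν ∧ ∀ (n : ℕ) (x : Fin n → Bool), ν (cylF x) = (1 / 2 : ENNReal) ^ n

/-- `K(k,n)`: nonnegative `k × I` matrices with all row sums `|I|/k` and all column sums `1`. -/
def Kset (k : ℕ) (I : Type) [Fintype I] : Set (Matrix (Fin k) I ℝ) :=
  {M | (∀ i j, 0 ≤ M i j) ∧ (∀ i, ∑ j, M i j = (Fintype.card I : ℝ) / k) ∧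
       (∀ j, ∑ i, M i j = 1)}

/-- The `k`-shape `C(S,k) = {M S Mᵀ : M ∈ K(k,n)}` of a square matrix `S`. -/
def matShape {I : Type} [Fintype I] (S : Matrix I I ℝ) (k : ℕ) :
    Set (Matrix (Fin k) (Fin k) ℝ) :=
  (fun M => M * S * Mᵀ) '' Kset k I

/-- `γ(S)`: the sum of all entries of `S`. -/
def gamma {I : Type} [Fintype I] (S : Matrix I I ℝ) : ℝ := ∑ i, ∑ j, S i j

/-- The entrywise ℓ¹ norm of a matrix. -/
def l1 {k : ℕ} (A : Matrix (Fin k) (Fin k) ℝ) : ℝ := ∑ i, ∑ j, |A i j|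

/-- The Hausdorff distance (w.r.t. the entrywise ℓ¹ norm) between `A` and `B` is at most `ε`. -/
def hdistLE {k : ℕ} (A B : Set (Matrix (Fin k) (Fin k) ℝ)) (ε : ℝ) : Prop :=
  (∀ X ∈ A, ∃ Y ∈ B, l1 (X - Y) ≤ ε) ∧ (∀ Y ∈ B, ∃ X ∈ A, l1 (X - Y) ≤ ε)

/-- Convergence of a sequence of shapes to `L` in the ℓ¹-Hausdorff metric. -/
def ShapeTendsto {k : ℕ} (C : ℕ → Set (Matrix (Fin k) (Fin k) ℝ))
    (L : Set (Matrix (Fin k) (Fin k) ℝ)) : Prop :=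
  ∀ ε : ℝ, 0 < ε → ∃ N : ℕ, ∀ n ≥ N, hdistLE (C n) L ε

/-- `C₀(μ,k)`: matrices `M` with `M i j = ∫ fᵢ(x) fⱼ(y) dμ` for a measurable partition of unity
`f₁,…,f_k` with `∫ fᵢ dν = 1/k`. -/
def mShape0 {α : Type} [MeasurableSpace α] (ν : Measure α) (μ : Measure (α × α)) (k : ℕ) :
    Set (Matrix (Fin k) (Fin k) ℝ) :=
  {M | ∃ f : Fin k → α → ℝ,
    (∀ i, Measurable (f i)) ∧ (∀ i x, 0 ≤ f i x) ∧ (∀ x, ∑ i, f i x = 1) ∧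
    (∀ i, ∫ x, f i x ∂ν = 1 / k) ∧
    (∀ i j, M i j = ∫ p, f i p.1 * f j p.2 ∂μ)}

/-- `C(μ,k)`: the topological closure of `C₀(μ,k)`. -/
def mShape {α : Type} [MeasurableSpace α] (ν : Measure α) (μ : Measure (α × α)) (k : ℕ) :
    Set (Matrix (Fin k) (Fin k) ℝ) := closure (mShape0 ν μ k)

/-- `C_c(μ,k)`: as `C₀(μ,k)` but with continuous witness functions. -/
def mShapeC (ν : Measure Cantor) (μ : Measure (Cantor × Cantor)) (k : ℕ) :
    Set (Matrix (Fin k) (Fin k) ℝ) :=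
  {M | ∃ f : Fin k → Cantor → ℝ,
    (∀ i, Continuous (f i)) ∧ (∀ i x, 0 ≤ f i x) ∧ (∀ x, ∑ i, f i x = 1) ∧
    (∀ i, ∫ x, f i x ∂ν = 1 / k) ∧
    (∀ i j, M i j = ∫ p, f i p.1 * f j p.2 ∂μ)}

open Classical in
/-- The real adjacency matrix of a simple graph. -/
def adjMat {V : Type} [Fintype V] (G : SimpleGraph V) : Matrix V V ℝ :=
  fun a b => if G.Adj a b then 1 else 0

/-- `C₀(G,k) = ‖A_G‖₁⁻¹ ⬝ C(A_G,k)` for a finite graph `G`. -/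
def graphShape {V : Type} [Fintype V] (G : SimpleGraph V) (k : ℕ) :
    Set (Matrix (Fin k) (Fin k) ℝ) :=
  (gamma (adjMat G))⁻¹ • matShape (adjMat G) k

/-- `K̂(k,m)`: characteristic matrices of balanced partitions of `{1,…,m}` into `k` classes. -/
def Khat (k m : ℕ) : Set (Matrix (Fin k) (Fin m) ℝ) :=
  {M | (∀ i j, M i j = 0 ∨ M i j = 1) ∧ (∀ j, ∑ i, M i j = 1) ∧
       (∀ i, ∑ j, M i j = (⌈(m : ℝ) / k⌉₊ : ℝ) ∨ ∑ j, M i j = (⌊(m : ℝ) / k⌋₊ : ℝ))}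

/-- `C̃₀(μ,α)`: matrices coming from a measurable partition of unity with `∫ fᵢ dν = αᵢ`. -/
def tShape0 {α : Type} [MeasurableSpace α] (ν : Measure α) (μ : Measure (α × α)) {m : ℕ}
    (a : Fin m → ℝ) : Set (Matrix (Fin m) (Fin m) ℝ) :=
  {M | ∃ f : Fin m → α → ℝ,
    (∀ i, Measurable (f i)) ∧ (∀ i x, 0 ≤ f i x) ∧ (∀ x, ∑ i, f i x = 1) ∧
    (∀ i, ∫ x, f i x ∂ν = a i) ∧
    (∀ i j, M i j = ∫ p, f i p.1 * f j p.2 ∂μ)}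

/-- `C̃(μ,α)`: the topological closure of `C̃₀(μ,α)`. -/
def tShape {α : Type} [MeasurableSpace α] (ν : Measure α) (μ : Measure (α × α)) {m : ℕ}
    (a : Fin m → ℝ) : Set (Matrix (Fin m) (Fin m) ℝ) := closure (tShape0 ν μ a)

/-- The Hausdorff distance w.r.t. the entrywise ℓ∞ norm between `A` and `B` is at most `ε`. -/
def hdistInfLE {m : ℕ} (A B : Set (Matrix (Fin m) (Fin m) ℝ)) (ε : ℝ) : Prop :=
  (∀ X ∈ A, ∃ Y ∈ B, ∀ i j, |X i j - Y i j| ≤ ε) ∧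
  (∀ Y ∈ B, ∃ X ∈ A, ∀ i j, |X i j - Y i j| ≤ ε)

/-- If `X ∈ C₀(μ,k)` then `C(X,r) ⊆ C(μ,r)` for every `r`. -/
theorem stmt_9 (ν : Measure Cantor) (hν : IsCoinMeasure ν)
    (μ : Measure (Cantor × Cantor)) (hfin : IsFiniteMeasure μ)
    (k : ℕ) (hk : 0 < k) (X : Matrix (Fin k) (Fin k) ℝ) (hX : X ∈ mShape0 ν μ k)
    (r : ℕ) (hr : 0 < r) :
    matShape X r ⊆ mShape ν μ r := by
  obtain ⟨f, hmeas, hnn, hsum, hint, hXf⟩ := hX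
  haveI := hν.1
  have hbd : ∀ a x, f a x ≤ 1 := fun a x => by
    rw [← hsum x]
    exact Finset.single_le_sum (fun i _ => hnn i x) (Finset.mem_univ a)
  have hintf : ∀ a b, Integrable (fun p : Cantor × Cantor => f a p.1 * f b p.2) μ := by
    intro a b
    apply (integrable_const (1:ℝ)).mono'
    · exact (((hmeas a).comp measurable_fst).mul
        ((hmeas b).comp measurable_snd)).aestronglyMeasurable
    · filter_upwards with p
      rw [Real.norm_eq_abs, abs_of_nonneg (mul_nonneg (hnn a p.1) (hnn b p.2))]
      exact mul_le_one₀ (hbd a p.1) (hnn b p.2) (hbd b p.2)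
  have hintν : ∀ a, Integrable (f a) ν := fun a =>
    (integrable_const (1:ℝ)).mono' (hmeas a).aestronglyMeasurable
      (by filter_upwards with x; rw [Real.norm_eq_abs, abs_of_nonneg (hnn a x)]; exact hbd a x)
  intro Y hY
  obtain ⟨M, hM, rfl⟩ := hY
  apply subset_closure
  refine ⟨fun i x => ∑ a, M i a * f a x, ?_, ?_, ?_, ?_, ?_⟩
  · intro i
    exact Finset.measurable_sum _ fun a _ => measurable_const.mul (hmeas a)
  · intro i x
    exact Finset.sum_nonneg fun a _ => mul_nonneg (hM.1 i a) (hnn a x)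
  · intro x
    rw [Finset.sum_comm]
    have : ∀ a : Fin k, ∑ i, M i a * f a x = f a x := by
      intro a
      rw [← Finset.sum_mul, hM.2.2 a, one_mul]
    simp only [this]
    exact hsum x
  · intro i
    rw [integral_finset_sum _ fun a _ => (hintν a).const_mul _]
    simp_rw [integral_const_mul, hint]
    rw [← Finset.sum_mul, hM.2.1 i]
    have hk' : (k : ℝ) ≠ 0 := Nat.cast_ne_zero.mpr hk.ne'
    have hr' : (r : ℝ) ≠ 0 := Nat.cast_ne_zero.mpr hr.ne'
    simp only [Fintype.card_fin]
    field_simp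
  · intro i j
    have hprod : ∀ p : Cantor × Cantor,
        (∑ a, M i a * f a p.1) * (∑ b, M j b * f b p.2)
          = ∑ a, ∑ b, (M i a * M j b) * (f a p.1 * f b p.2) := by
      intro p
      rw [Finset.sum_mul_sum]
      exact Finset.sum_congr rfl fun a _ => Finset.sum_congr rfl fun b _ => by ring
    calc (M * X * Mᵀ) i j
        = ∑ a, ∑ b, (M i a * M j b) * X a b := by
          simp [Matrix.mul_apply, Finset.sum_mul, Finset.mul_sum]
          rw [Finset.sum_comm]
          exact Finset.sum_congr rfl fun a _ => Finset.sum_congr rfl fun b _ => by ring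
      _ = ∫ p, (∑ a, M i a * f a p.1) * (∑ b, M j b * f b p.2) ∂μ := by
          simp_rw [hprod]
          rw [integral_finset_sum _ fun a _ => integrable_finset_sum _ fun b _ =>
            (hintf a b).const_mul _]
          refine Finset.sum_congr rfl fun a _ => ?_
          rw [integral_finset_sum _ fun b _ => (hintf a b).const_mul _]
          refine Finset.sum_congr rfl fun b _ => ?_
          rw [integral_const_mul, hXf a b]
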